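/- Let k > 1 and let M be a closed manifold with a rank-k real vector bundle ξ over M. If the mod-2 cohomology ring H*(P(ξ); ℤ/2) is isomorphic as a graded H*(M)-algebra to H*(M × ℝP^(k-1); ℤ/2), where H*(P(ξ)) ≅ H*(M)[x]/(Σ_{i=0}^{k} w_i(ξ) x^(k-i)) with x of degree 1, then there exists X ∈ H^1(M; ℤ/2) such that the total Stiefel-Whitney class satisfies w(ξ) = (1+X)^k. -/

import Mathlib

open Polynomial in
/-- Algebraic form of Proposition 3.1 (⇒): let `R = H*(M)` be a graded `ℤ/2`-algebra,
`w i ∈ 𝒜 i` the Stiefel–Whitney classes of a rank-`k` bundle (`k > 1`), and model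
`H*(P(ξ)) = R[x]/(x^k - Σ_{i=1}^k w_i x^(k-i))` (Borel–Hirzebruch) and
`H*(M × ℝP^(k-1)) = R[a]/(a^k)`.  If there is a degree-respecting `R`-algebra
isomorphism (so the degree-one generator `a` is sent to `r + ε·x` with `r` of degree
one), then `w(ξ) = (1+X)^k` for some degree-one `X ∈ R`, i.e. `w i = C(k,i)·X^i`. -/
theorem stmt_6 {R : Type} [CommRing R] [Algebra (ZMod 2) R]
    (𝒜 : ℕ → Submodule (ZMod 2) R) [GradedRing 𝒜]
    (k : ℕ) (hk : 1 < k) (w : ℕ → R) (hw : ∀ i, w i ∈ 𝒜 i)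
    (p : Polynomial R)
    (hp : p = X ^ k - ∑ i ∈ Finset.Icc 1 k, C (w i) * X ^ (k - i))
    (e : AdjoinRoot ((X : Polynomial R) ^ k) ≃ₐ[R] AdjoinRoot p)
    (he : ∃ r ∈ 𝒜 1, ∃ ε : R, (ε = 0 ∨ ε = 1) ∧
      e (AdjoinRoot.root ((X : Polynomial R) ^ k))
        = algebraMap R (AdjoinRoot p) r + ε • AdjoinRoot.root p) :
    ∃ Y ∈ 𝒜 1, ∀ i, 1 ≤ i → i ≤ k → w i = (k.choose i : R) * Y ^ i := by
  obtain ⟨r, hr, ε, hε, heq⟩ := he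
  rcases subsingleton_or_nontrivial R with hR | hR
  · exact ⟨0, Submodule.zero_mem _, fun i _ _ => Subsingleton.elim _ _⟩
  -- characteristic 2
  have h2 : (2 : R) = 0 := by
    have h := map_natCast (algebraMap (ZMod 2) R) 2
    have : ((2 : ℕ) : ZMod 2) = 0 := by decide
    rw [this, map_zero] at h
    exact_mod_cast h.symm
  have heven : ∀ n : ℕ, Even n → (n : R) = 0 := by
    rintro n ⟨m, rfl⟩
    push_cast
    rw [← two_mul, h2, zero_mul]
  -- p is monic of degree k
  have hdegsum : (∑ i ∈ Finset.Icc 1 k, C (w i) * X ^ (k - i)).degree ≤ ((k - 1 : ℕ) : WithBot ℕ) := by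
    refine (Polynomial.degree_sum_le _ _).trans (Finset.sup_le fun i hi => ?_)
    refine (Polynomial.degree_C_mul_X_pow_le _ _).trans ?_
    have : k - i ≤ k - 1 := by
      simp only [Finset.mem_Icc] at hi; omega
    exact_mod_cast this
  have hdeglt : (∑ i ∈ Finset.Icc 1 k, C (w i) * X ^ (k - i)).degree < (k : WithBot ℕ) :=
    lt_of_le_of_lt hdegsum (by exact_mod_cast Nat.sub_lt (by omega) one_pos)
  have hmonic : p.Monic := by
    rw [hp]
    exact Polynomial.monic_X_pow_sub hdeglt
  have hp0 : p ≠ 0 := hmonic.ne_zero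
  have hpdeg : p.degree = (k : WithBot ℕ) := by
    have hlt : (∑ i ∈ Finset.Icc 1 k, C (w i) * X ^ (k - i)).degree
        < ((X : Polynomial R) ^ k).degree := by
      rw [Polynomial.degree_X_pow]; exact hdeglt
    rw [hp, Polynomial.degree_sub_eq_left_of_degree_lt hlt, Polynomial.degree_X_pow]
  rcases hε with rfl | rfl
  · -- ε = 0 : contradiction
    exfalso
    rw [zero_smul, add_zero] at heq
    obtain ⟨q, hq⟩ := AdjoinRoot.mk_surjective (e.symm (AdjoinRoot.root p))
    have h1 : AdjoinRoot.root p = algebraMap R (AdjoinRoot p) (q.eval r) := by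
      have h0 := congrArg e hq
      rw [e.apply_symm_apply] at h0
      have h1 : e (Polynomial.aeval (AdjoinRoot.root ((X : Polynomial R) ^ k)) q)
          = Polynomial.aeval (e (AdjoinRoot.root ((X : Polynomial R) ^ k))) q := by
        simpa using (Polynomial.aeval_algHom_apply
          (e : AdjoinRoot ((X : Polynomial R) ^ k) →ₐ[R] AdjoinRoot p)
          (AdjoinRoot.root ((X : Polynomial R) ^ k)) q).symm
      rw [← h0, ← AdjoinRoot.aeval_eq, h1, heq,
        Polynomial.aeval_algebraMap_apply_eq_algebraMap_eval]
    have h3 : AdjoinRoot.mk p (X - C (q.eval r)) = 0 := by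
      rw [map_sub, AdjoinRoot.mk_X, AdjoinRoot.mk_C, ← AdjoinRoot.algebraMap_eq, h1, sub_self]
    obtain ⟨u, hu⟩ := AdjoinRoot.mk_eq_zero.mp h3
    have hu0 : u ≠ 0 := by
      rintro rfl
      rw [mul_zero] at hu
      exact (Polynomial.monic_X_sub_C (q.eval r)).ne_zero hu
    have h5 : (X - C (q.eval r)).natDegree = p.natDegree + u.natDegree := by
      rw [hu]; exact hmonic.natDegree_mul' hu0
    rw [Polynomial.natDegree_X_sub_C, Polynomial.natDegree_eq_of_degree_eq_some hpdeg] at h5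
    omega
  · -- ε = 1
    rw [one_smul] at heq
    have hroot : e.symm (AdjoinRoot.root p)
        = AdjoinRoot.root ((X : Polynomial R) ^ k) - algebraMap R _ r := by
      have := congrArg e.symm heq
      rw [e.symm_apply_apply, map_add, AlgEquiv.commutes] at this
      rw [this]; ring
    have hz : Polynomial.aeval
        (AdjoinRoot.root ((X : Polynomial R) ^ k) - algebraMap R _ r) p = 0 := by
      have h1 : e.symm (Polynomial.aeval (AdjoinRoot.root p) p)
          = Polynomial.aeval (e.symm (AdjoinRoot.root p)) p := by
        simpa using (Polynomial.aeval_algHom_apply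
          (e.symm : AdjoinRoot p →ₐ[R] AdjoinRoot ((X : Polynomial R) ^ k))
          (AdjoinRoot.root p) p).symm
      rw [← hroot, ← h1, AdjoinRoot.aeval_eq, AdjoinRoot.mk_self, map_zero]
    have hrr : r + r = 0 := by
      have : r + r = 2 * r := by ring
      rw [this, h2, zero_mul]
    have hdvd : (X : Polynomial R) ^ k ∣ p.comp (X + C r) := by
      rw [← AdjoinRoot.mk_eq_zero, ← AdjoinRoot.aeval_eq, Polynomial.aeval_comp]
      have heval : Polynomial.aeval (AdjoinRoot.root ((X : Polynomial R) ^ k)) (X + C r)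
          = AdjoinRoot.root ((X : Polynomial R) ^ k) - algebraMap R _ r := by
        rw [map_add, Polynomial.aeval_X, Polynomial.aeval_C]
        have h0 : algebraMap R (AdjoinRoot ((X : Polynomial R) ^ k)) r
            + algebraMap R (AdjoinRoot ((X : Polynomial R) ^ k)) r = 0 := by
          rw [← map_add, hrr, map_zero]
        linear_combination h0
      rw [heval, hz]
    have hcoeff : ∀ m, m < k → (p.comp (X + C r)).coeff m = 0 := by
      obtain ⟨u, hu⟩ := hdvd
      intro m hm
      rw [hu, mul_comm, Polynomial.coeff_mul_X_pow', if_neg (by omega)]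
    -- key coefficient equation
    have key : ∀ m, m < k →
        r ^ (k - m) * (k.choose m : R)
          = ∑ i ∈ Finset.Icc 1 k, w i * (r ^ (k - i - m) * ((k - i).choose m : R)) := by
      intro m hm
      have h := hcoeff m hm
      rw [hp, Polynomial.sub_comp, Polynomial.pow_comp, Polynomial.X_comp,
        Polynomial.sum_comp] at h
      simp only [Polynomial.mul_comp, Polynomial.C_comp, Polynomial.pow_comp,
        Polynomial.X_comp, Polynomial.coeff_sub, Polynomial.finset_sum_coeff,
        Polynomial.coeff_C_mul, Polynomial.coeff_X_add_C_pow] at h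
      linear_combination h
    refine ⟨r, hr, ?_⟩
    intro j
    induction j using Nat.strong_induction_on with
    | _ j ih =>
      intro hj1 hjk
      have h := key (k - j) (by omega)
      have hkj : k - (k - j) = j := by omega
      rw [hkj, Nat.choose_symm hjk] at h
      have hsum : ∑ i ∈ Finset.Icc 1 k, w i * (r ^ (k - i - (k - j)) * ((k - i).choose (k - j) : R))
          = ∑ i ∈ Finset.Icc 1 j, w i * (r ^ (k - i - (k - j)) * ((k - i).choose (k - j) : R)) := by
        symm
        apply Finset.sum_subset
        · intro i hi; simp only [Finset.mem_Icc] at *; omega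
        · intro i hi hni
          simp only [Finset.mem_Icc] at hi hni
          have hch : (k - i).choose (k - j) = 0 := Nat.choose_eq_zero_of_lt (by omega)
          rw [hch]; push_cast; ring
      have hins : Finset.Icc 1 j = insert j (Finset.Icc 1 (j - 1)) := by
        ext x; simp only [Finset.mem_Icc, Finset.mem_insert]; omega
      rw [hsum, hins, Finset.sum_insert (by simp only [Finset.mem_Icc]; omega)] at h
      have hjj : k - j - (k - j) = 0 := by omega
      simp only [hjj, Nat.choose_self, pow_zero, Nat.cast_one, mul_one] at h
      have hrest : ∑ i ∈ Finset.Icc 1 (j - 1),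
            w i * (r ^ (k - i - (k - j)) * ((k - i).choose (k - j) : R))
          = ((k.choose j : R) * r ^ j) * ∑ i ∈ Finset.Icc 1 (j - 1), ((j.choose i : R)) := by
        rw [Finset.mul_sum]
        apply Finset.sum_congr rfl
        intro i hi
        simp only [Finset.mem_Icc] at hi
        rw [ih i (by omega) (by omega) (by omega)]
        have h1 : k - i - (k - j) = j - i := by omega
        have h2' : (k - i).choose (k - j) = (k - i).choose (j - i) := by
          rw [show k - j = (k - i) - (j - i) by omega, Nat.choose_symm (by omega)]
        have h3 : k.choose j * j.choose i = k.choose i * (k - i).choose (j - i) :=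
          Nat.choose_mul (n := k) (by omega)
        have h4 : ((k.choose j * j.choose i : ℕ) : R)
            = ((k.choose i * (k - i).choose (j - i) : ℕ) : R) := by exact_mod_cast congrArg _ h3
        push_cast at h4
        have hpow : r ^ i * r ^ (j - i) = r ^ j := by
          rw [← pow_add]; congr 1; omega
        rw [h1, h2', ← hpow]
        linear_combination (-(r ^ i * r ^ (j - i))) * h4
      have hbin : ∑ i ∈ Finset.Icc 1 (j - 1), ((j.choose i : R)) = 0 := by
        have htot : ∑ i ∈ Finset.range (j + 1), ((j.choose i : R)) = 0 := by
          rw [← Nat.cast_sum, Nat.sum_range_choose]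
          exact heven _ ⟨2 ^ (j - 1), by rw [← two_mul, ← pow_succ']; congr 1; omega⟩
        have hdecomp : Finset.range (j + 1) = insert 0 (insert j (Finset.Icc 1 (j - 1))) := by
          ext x; simp only [Finset.mem_range, Finset.mem_insert, Finset.mem_Icc]; omega
        rw [hdecomp, Finset.sum_insert (by simp only [Finset.mem_insert, Finset.mem_Icc]; omega),
          Finset.sum_insert (by simp only [Finset.mem_Icc]; omega),
          Nat.choose_zero_right, Nat.choose_self, Nat.cast_one] at htot
        linear_combination htot - h2
      rw [hrest, hbin, mul_zero, add_zero] at h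
      linear_combination -h
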